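/- Suppose the kernel of a matrix X ∈ ℝ^{n×p} satisfies NSP(s, C) for some C > 1. Then for every s-sparse vector β* ∈ ℝ^p, β* is the unique minimizer of ‖β‖₁ subject to Xβ = Xβ*. -/

import Mathlib

/-- If the kernel of `X` satisfies NSP(s, C) with `C > 1`, then every `s`-sparse
vector `β*` is the unique minimizer of `‖β‖₁` subject to `Xβ = Xβ*`. -/
theorem nsp_unique_l1_minimizer {n p : ℕ} (X : Matrix (Fin n) (Fin p) ℝ)
    (s : ℕ) (C : ℝ) (hC : 1 < C)
    (hNSP : ∀ γ : Fin p → ℝ, X.mulVec γ = 0 → ∀ S : Finset (Fin p), S.card ≤ s →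
      C * ∑ i ∈ S, |γ i| ≤ ∑ i ∈ Sᶜ, |γ i|)
    (β : Fin p → ℝ)
    (hβ : (Finset.univ.filter fun i => β i ≠ 0).card ≤ s) :
    ∀ β' : Fin p → ℝ, X.mulVec β' = X.mulVec β → β' ≠ β →
      ∑ i, |β i| < ∑ i, |β' i| := by
  intro β' hX hne
  set S : Finset (Fin p) := Finset.univ.filter fun i => β i ≠ 0 with hSdef
  set γ : Fin p → ℝ := fun i => β' i - β i with hγdef
  have hker : X.mulVec γ = 0 := by
    have : X.mulVec (β' - β) = X.mulVec β' - X.mulVec β := Matrix.mulVec_sub X β' β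
    exact (by simpa [hX, sub_self] using this : X.mulVec (β' - β) = 0)
  have hnsp := hNSP γ hker S hβ
  -- β vanishes off S
  have hβc : ∀ i ∈ Sᶜ, β i = 0 := by
    intro i hi
    simpa [hSdef, Finset.mem_compl, Finset.mem_filter] using hi
  -- split sums
  have hsplit : ∀ f : Fin p → ℝ, ∑ i, f i = ∑ i ∈ S, f i + ∑ i ∈ Sᶜ, f i := by
    intro f
    rw [Finset.sum_add_sum_compl]
  have hβsum : ∑ i, |β i| = ∑ i ∈ S, |β i| := by
    have h0 : ∑ i ∈ Sᶜ, |β i| = 0 :=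
      Finset.sum_eq_zero (fun i hi => by rw [hβc i hi, abs_zero])
    rw [hsplit, h0, add_zero]
  have hβ'c : ∀ i ∈ Sᶜ, |β' i| = |γ i| := by
    intro i hi
    rw [hγdef]
    simp [hβc i hi]
  have hβ'sum : ∑ i, |β' i| = ∑ i ∈ S, |β' i| + ∑ i ∈ Sᶜ, |γ i| := by
    rw [hsplit]
    congr 1
    exact Finset.sum_congr rfl hβ'c
  have htri : ∀ i ∈ S, |β i| - |γ i| ≤ |β' i| := by
    intro i _
    have : |β i| - |β' i - β i| ≤ |β' i| := by
      have := abs_sub_abs_le_abs_sub (β i) (β' i)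
      have h2 := abs_sub_comm (β i) (β' i)
      linarith [abs_sub_abs_le_abs_sub (β i) (β' i), (abs_sub_comm (β i) (β' i)).le]
    simpa [hγdef] using this
  have hSsum : ∑ i ∈ S, |β i| - ∑ i ∈ S, |γ i| ≤ ∑ i ∈ S, |β' i| := by
    rw [← Finset.sum_sub_distrib]
    exact Finset.sum_le_sum htri
  by_cases hz : ∑ i ∈ S, |γ i| = 0
  · -- γ vanishes on S, so β' = β on S, and γ ≠ 0 somewhere in Sᶜ
    have hγS : ∀ i ∈ S, γ i = 0 := by
      intro i hi
      have := (Finset.sum_eq_zero_iff_of_nonneg (fun i _ => abs_nonneg (γ i))).mp hz i hi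
      exact abs_eq_zero.mp this
    have hβ'S : ∑ i ∈ S, |β' i| = ∑ i ∈ S, |β i| := by
      refine Finset.sum_congr rfl fun i hi => ?_
      have := hγS i hi
      have : β' i = β i := by
        have h := hγS i hi
        simpa [hγdef, sub_eq_zero] using h
      rw [this]
    have hγne : ∃ j, γ j ≠ 0 := by
      by_contra h
      push_neg at h
      apply hne
      funext i
      have := h i
      simpa [hγdef, sub_eq_zero] using this
    obtain ⟨j, hj⟩ := hγne
    have hjc : j ∈ Sᶜ := by
      by_contra hjS
      rw [Finset.notMem_compl] at hjS
      exact hj (hγS j hjS)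
    have hpos : 0 < ∑ i ∈ Sᶜ, |γ i| :=
      Finset.sum_pos' (fun i _ => abs_nonneg _) ⟨j, hjc, abs_pos.mpr hj⟩
    rw [hβsum, hβ'sum, hβ'S]
    linarith
  · have hpos : 0 < ∑ i ∈ S, |γ i| :=
      lt_of_le_of_ne (Finset.sum_nonneg fun i _ => abs_nonneg _) (Ne.symm hz)
    rw [hβsum, hβ'sum]
    nlinarith
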